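/- Let $G$ be a group. There is a group isomorphism between the abelianization of $A(G)$ and the free abelian group on the set of conjugacy classes of $G$, sending, for each $g \in G$, the image of the generator $\varphi_G(g)$ in the abelianization to the basis element indexed by the conjugacy class of $g$. -/

import Mathlib

open Quandles

section Aux

variable {G : Type*} [Group G]

/-- Abbreviation for the abelianization. -/
private abbrev BB (G : Type*) [Group G] := Abelianization (Rack.EnvelGroup (Quandle.Conj G))

private def fwdShelf : Quandle.Conj G →◃ Quandle.Conj (Multiplicative (FreeAbelianGroup (ConjClasses G))) where
  toFun g := Multiplicative.ofAdd (FreeAbelianGroup.of (ConjClasses.mk g))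
  map_act' := by
    intro x y
    have h : ConjClasses.mk (Shelf.act x y : G) = ConjClasses.mk y := by
      have hx : (Shelf.act x y : G) = x * y * x⁻¹ := Quandle.conj_act_eq_conj x y
      rw [hx, ConjClasses.mk_eq_mk_iff_isConj]
      exact (isConj_iff.mpr ⟨x, rfl⟩).symm
    show Multiplicative.ofAdd (FreeAbelianGroup.of (ConjClasses.mk (Shelf.act x y : G))) = _
    rw [h, Quandle.conj_act_eq_conj]
    rw [mul_comm, inv_mul_cancel_left]

private def fwdHom : BB G →* Multiplicative (FreeAbelianGroup (ConjClasses G)) :=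
  Abelianization.lift (Rack.toEnvelGroup.map fwdShelf)

private lemma fwdHom_apply (g : G) :
    fwdHom (Abelianization.of (Rack.toEnvelGroup (Quandle.Conj G) g)) =
      Multiplicative.ofAdd (FreeAbelianGroup.of (ConjClasses.mk g)) := by
  show Rack.toEnvelGroup.map fwdShelf (Rack.toEnvelGroup (Quandle.Conj G) g) = _
  have := congrArg (fun f => ShelfHom.toFun f g)
    (Rack.toEnvelGroup.univ (Quandle.Conj G) (Multiplicative (FreeAbelianGroup (ConjClasses G))) fwdShelf)
  exact this

private def backFun : ConjClasses G → Additive (BB G) :=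
  Quotient.lift (fun g => Additive.ofMul (Abelianization.of (Rack.toEnvelGroup (Quandle.Conj G) g)))
    (by
      intro a b hab
      obtain ⟨c, hc⟩ := hab
      have hb : b = (c : G) * a * (c : G)⁻¹ := by
        rw [hc.eq, mul_inv_cancel_right]
      have hact : (Shelf.act (c : G) a : Quandle.Conj G) = b := by
        rw [hb, Quandle.conj_act_eq_conj]
      have h1 : Rack.toEnvelGroup (Quandle.Conj G) b
          = Shelf.act (Rack.toEnvelGroup (Quandle.Conj G) (c : G)) (Rack.toEnvelGroup (Quandle.Conj G) a) := by
        rw [← hact]; exact (Rack.toEnvelGroup (Quandle.Conj G)).map_act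
      simp only [Additive.ofMul.apply_eq_iff_eq]
      rw [h1, Quandle.conj_act_eq_conj]
      rw [map_mul, map_mul, map_inv, mul_comm, inv_mul_cancel_left])

private lemma backFun_mk (g : G) :
    backFun (ConjClasses.mk g) = Additive.ofMul (Abelianization.of (Rack.toEnvelGroup (Quandle.Conj G) g)) :=
  rfl

private def bwdHom : Multiplicative (FreeAbelianGroup (ConjClasses G)) →* BB G where
  toFun a := Additive.toMul (FreeAbelianGroup.lift backFun a.toAdd)
  map_one' := by simp
  map_mul' a b := by
    show Additive.toMul (FreeAbelianGroup.lift backFun (a.toAdd + b.toAdd)) = _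
    rw [map_add]; rfl

/-- Uniqueness: homs out of EnvelGroup agree if they agree on generators. -/
private lemma envel_hom_ext {H : Type*} [Group H]
    (f₁ f₂ : Rack.EnvelGroup (Quandle.Conj G) →* H)
    (h : ∀ g : G, f₁ (Rack.toEnvelGroup (Quandle.Conj G) g) = f₂ (Rack.toEnvelGroup (Quandle.Conj G) g)) :
    f₁ = f₂ := by
  have h1 : Rack.toEnvelGroup.map.symm f₁ = Rack.toEnvelGroup.map.symm f₂ := by
    show (Quandle.Conj.map f₁).comp (Rack.toEnvelGroup (Quandle.Conj G))
      = (Quandle.Conj.map f₂).comp (Rack.toEnvelGroup (Quandle.Conj G))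
    have : ∀ (f : Rack.EnvelGroup (Quandle.Conj G) →* H) (g : G),
        ((Quandle.Conj.map f).comp (Rack.toEnvelGroup (Quandle.Conj G))).toFun g
          = f (Rack.toEnvelGroup (Quandle.Conj G) g) := fun _ _ => rfl
    cases' hh1 : (Quandle.Conj.map f₁).comp (Rack.toEnvelGroup (Quandle.Conj G)) with t1 m1
    cases' hh2 : (Quandle.Conj.map f₂).comp (Rack.toEnvelGroup (Quandle.Conj G)) with t2 m2
    congr 1
    funext g
    have e1 := this f₁ g; rw [hh1] at e1
    have e2 := this f₂ g; rw [hh2] at e2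
    exact e1.trans ((h g).trans e2.symm)
  exact Rack.toEnvelGroup.map.symm.injective h1

end Aux

/-- For a group `G`, there is a group isomorphism between the abelianization of
`A(G)` and the free abelian group on the set of conjugacy classes of `G`, sending the image of
the generator `φ_G(g)` in the abelianization to the basis element indexed by the conjugacy
class of `g`. -/
theorem stmt19 {G : Type*} [Group G] :
    ∃ e : Abelianization (Rack.EnvelGroup (Quandle.Conj G)) ≃*
        Multiplicative (FreeAbelianGroup (ConjClasses G)),
      ∀ g : G, e (Abelianization.of (Rack.toEnvelGroup (Quandle.Conj G) g)) =
        Multiplicative.ofAdd (FreeAbelianGroup.of (ConjClasses.mk g)) := by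
  have hright0 : ∀ x : FreeAbelianGroup (ConjClasses G),
      fwdHom (G := G) (bwdHom (Multiplicative.ofAdd x)) = Multiplicative.ofAdd x := by
    intro x
    induction x using FreeAbelianGroup.induction_on with
    | zero =>
      show fwdHom (G := G) (bwdHom 1) = 1
      rw [map_one, map_one]
    | of c =>
      obtain ⟨g, rfl⟩ := ConjClasses.mk_surjective c
      have h1 : bwdHom (Multiplicative.ofAdd (FreeAbelianGroup.of (ConjClasses.mk g)))
          = Abelianization.of (Rack.toEnvelGroup (Quandle.Conj G) g) := by
        show Additive.toMul (FreeAbelianGroup.lift backFun (FreeAbelianGroup.of (ConjClasses.mk g))) = _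
        rw [FreeAbelianGroup.lift_apply_of, backFun_mk]
        rfl
      rw [h1, fwdHom_apply]
    | neg x hx =>
      show fwdHom (G := G) (bwdHom (Multiplicative.ofAdd (FreeAbelianGroup.of x))⁻¹)
        = (Multiplicative.ofAdd (FreeAbelianGroup.of x))⁻¹
      rw [map_inv, map_inv, hx]
    | add x y hx hy =>
      show fwdHom (G := G) (bwdHom (Multiplicative.ofAdd x * Multiplicative.ofAdd y))
        = Multiplicative.ofAdd x * Multiplicative.ofAdd y
      rw [map_mul, map_mul, hx, hy]
  have hright : ∀ a : Multiplicative (FreeAbelianGroup (ConjClasses G)),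
      fwdHom (G := G) (bwdHom a) = a := fun a => hright0 a.toAdd
  have hleft : ∀ b : BB G, bwdHom (fwdHom b) = b := by
    have key : (bwdHom.comp fwdHom : BB G →* BB G) = MonoidHom.id (BB G) := by
      apply Abelianization.hom_ext
      apply envel_hom_ext
      intro g
      show bwdHom (fwdHom (Abelianization.of (Rack.toEnvelGroup (Quandle.Conj G) g)))
        = Abelianization.of (Rack.toEnvelGroup (Quandle.Conj G) g)
      rw [fwdHom_apply]
      show Additive.toMul (FreeAbelianGroup.lift backFun (FreeAbelianGroup.of (ConjClasses.mk g))) = _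
      rw [FreeAbelianGroup.lift_apply_of, backFun_mk]
      rfl
    intro b
    exact congrArg (fun f => DFunLike.coe f b) key
  refine ⟨MonoidHom.toMulEquiv fwdHom bwdHom (MonoidHom.ext hleft) (MonoidHom.ext hright),
    fun g => ?_⟩
  exact fwdHom_apply g
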